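/- If a group G contains a totally symmetric subset of k elements of finite order, and every finite abelian subgroup of G has order at most 4g + 4, then g ≥ 2^{k−3} − 1. -/

import Mathlib

/-- A subset `X` of a group `G` is *totally symmetric* if its elements commute
pairwise and every permutation of `X` is realized by conjugation by an element
of `G`. -/
def IsTotallySymmetric {G : Type*} [Group G] (X : Set G) : Prop :=
  (∀ x ∈ X, ∀ y ∈ X, x * y = y * x) ∧
  ∀ σ : Equiv.Perm X, ∃ g : G, ∀ x : X, g * (x : G) * g⁻¹ = (σ x : G)

/-- If `G` contains a totally symmetric subset of `k` elements of finite order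
and every finite abelian subgroup of `G` has order at most `4g + 4`, then
`g ≥ 2 ^ (k - 3) - 1`. -/
theorem stmt_8 {G : Type*} [Group G] (X : Set G) (k g : ℕ)
    (hX : IsTotallySymmetric X) (hfin : X.Finite) (hcard : X.ncard = k)
    (hord : ∀ x ∈ X, IsOfFinOrder x)
    (habel : ∀ H : Subgroup G, (∀ a ∈ H, ∀ b ∈ H, a * b = b * a) →
      (H : Set G).Finite → Nat.card H ≤ 4 * g + 4) :
    2 ^ (k - 3) - 1 ≤ g := by
  classical
  obtain ⟨hcomm, hperm⟩ := hX
  rcases le_or_gt k 3 with hk | hk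
  · have h3 : k - 3 = 0 := by omega
    simp [h3]
  -- setup
  set s : Finset G := hfin.toFinset with hs
  have hsX : ∀ x, x ∈ s ↔ x ∈ X := fun x => hfin.mem_toFinset
  have hscard : s.card = k := by rw [← hcard, Set.ncard_eq_toFinset_card _ hfin]
  have hsne : s.Nonempty := by rw [← Finset.card_pos, hscard]; omega
  obtain ⟨x₀, hx₀⟩ := hsne
  have hx₀X : x₀ ∈ X := (hsX x₀).1 hx₀
  set t : Finset G := s.erase x₀ with ht
  have htcard : t.card = k - 1 := by rw [ht, Finset.card_erase_of_mem hx₀, hscard]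
  have htX : ∀ x ∈ t, x ∈ X := fun x hx => (hsX x).1 (Finset.mem_of_mem_erase hx)
  have htne : ∀ x ∈ t, x ≠ x₀ := fun x hx => Finset.ne_of_mem_erase hx
  have hXcomm : ∀ x ∈ X, ∀ y ∈ X, Commute x y := hcomm
  -- pairwise commuting hypothesis maker
  have hucomm : ∀ (u : Finset G), (∀ x ∈ u, x ∈ X) →
      (↑u : Set G).Pairwise (Function.onFun Commute id) := by
    intro u hu x hx y hy _
    exact hXcomm _ (hu x hx) _ (hu y hy)
  -- the subgroup
  set H : Subgroup G := Subgroup.closure X with hH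
  have hHcomm : ∀ a ∈ H, ∀ b ∈ H, a * b = b * a := by
    intro a ha b hb
    refine Subgroup.closure_induction₂ (p := fun x y _ _ => Commute x y)
      (fun x y hx hy => hXcomm x hx y hy) (fun x _ => Commute.one_left x)
      (fun x _ => Commute.one_right x)
      (fun x y z _ _ _ h1 h2 => h1.mul_left h2)
      (fun y z x _ _ _ h1 h2 => h1.mul_right h2)
      (fun x y _ _ h => h.inv_left) (fun x y _ _ h => h.inv_right) ha hb
  letI : CommGroup H :=
    { (inferInstance : Group H) with
      mul_comm := fun a b => Subtype.ext (hHcomm a a.2 b b.2) }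
  haveI : Finite X := hfin.to_subtype
  haveI hfg : Group.FG H := Group.closure_finite_fg X
  have hall : ∀ x ∈ Subgroup.closure X, IsOfFinOrder x := by
    intro x hx
    induction hx using Subgroup.closure_induction with
    | mem x hx => exact hord x hx
    | one => exact IsOfFinOrder.one
    | mul x y hx hy h1 h2 =>
      exact Commute.isOfFinOrder_mul (hHcomm x hx y hy) h1 h2
    | inv x hx h1 => exact h1.inv
  have htor : Monoid.IsTorsion H := by
    intro h
    obtain ⟨n, hn, he⟩ := isOfFinOrder_iff_pow_eq_one.mp (hall (h : G) h.2)
    exact isOfFinOrder_iff_pow_eq_one.mpr ⟨n, hn, Subtype.ext (by push_cast; exact he)⟩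
  haveI hHfin : Finite H := CommGroup.finite_of_fg_torsion (↥H) htor
  have hHsetfin : (H : Set G).Finite := by
    haveI : Finite ((H : Set G) : Type _) := hHfin
    exact Set.toFinite _
  -- products over subsets
  have huX : ∀ u : Finset G, u ⊆ t → ∀ x ∈ u, x ∈ X := fun u hu x hx => htX x (hu hx)
  set F : ∀ u : Finset G, u ⊆ t → G :=
    fun u hu => u.noncommProd id (hucomm u (huX u hu)) with hF
  -- key injectivity claim
  have key : ∀ u (hu : u ⊆ t), ∀ v (hv : v ⊆ t), F u hu = F v hv → u = v := by
    have main : ∀ u (hu : u ⊆ t), ∀ v (hv : v ⊆ t), ∀ i, i ∈ u → i ∉ v →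
        F u hu ≠ F v hv := by
      intro u hu v hv i hiu hiv heq
      have hiX : i ∈ X := huX u hu i hiu
      have hine : i ≠ x₀ := htne i (hu hiu)
      -- swap i and x₀
      set σ : Equiv.Perm X := Equiv.swap ⟨i, hiX⟩ ⟨x₀, hx₀X⟩ with hσ
      obtain ⟨a, ha⟩ := hperm σ
      set c : G → G := fun x => a * x * a⁻¹ with hc
      have hchom : ∀ x y : G, c (x * y) = c x * c y := by
        intro x y; simp only [hc]; group
      have hcfix : ∀ x ∈ t, x ≠ i → c x = x := by
        intro x hx hxi
        have hxX : x ∈ X := htX x hx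
        have : c x = (σ ⟨x, hxX⟩ : G) := ha ⟨x, hxX⟩
        rw [this, hσ, Equiv.swap_apply_of_ne_of_ne]
        · exact fun hcon => hxi (congrArg Subtype.val hcon)
        · exact fun hcon => (htne x hx) (congrArg Subtype.val hcon)
      have hci : c i = x₀ := by
        have : c i = (σ ⟨i, hiX⟩ : G) := ha ⟨i, hiX⟩
        rw [this, hσ, Equiv.swap_apply_left]
      -- conjugation as a monoid hom
      set φ : G →* G := (MulAut.conj a).toMonoidHom with hφ
      have hφc : ∀ x, φ x = c x := by
        intro x; simp [hφ, hc]
      -- conjugate of F v is F v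
      have hv' : φ (F v hv) = F v hv := by
        rw [hF]
        rw [Finset.map_noncommProd]
        refine Finset.noncommProd_congr rfl ?_ _
        intro x hx
        simp only [id_eq]
        rw [hφc, hcfix x (hv hx) (fun hxi => hiv (hxi ▸ hx))]
      -- conjugate of F u is x₀ * F (u.erase i)
      set u' : Finset G := u.erase i with hu'
      have hu't : u' ⊆ t := fun x hx => hu (Finset.mem_of_mem_erase hx)
      have hins : insert i u' = u := Finset.insert_erase hiu
      have hiu' : i ∉ u' := Finset.notMem_erase i u
      have hsplit : ∀ (w : G) (hw : w ∈ X) (f : G → G)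
          (hfw : f i = w) (hfid : ∀ x ∈ u', f x = x)
          (comm : (↑(insert i u') : Set G).Pairwise (Function.onFun Commute f)),
          (insert i u').noncommProd f comm = w * F u' hu't := by
        intro w hw f hfw hfid comm
        rw [Finset.noncommProd_insert_of_notMem _ _ _ _ hiu', hfw]
        congr 1
        exact Finset.noncommProd_congr rfl (fun x hx => hfid x hx) _
      have hconjU : φ (F u hu) = x₀ * F u' hu't := by
        rw [hF, Finset.map_noncommProd]
        have : u.noncommProd (fun x => φ (id x)) (fun x hx y hy h =>
            ((hucomm u (huX u hu)).of_refl hx hy).map φ) =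
            (insert i u').noncommProd (fun x => φ (id x)) (by
              rw [hins]; exact fun x hx y hy h =>
                ((hucomm u (huX u hu)).of_refl hx hy).map φ) := by
          exact (Finset.noncommProd_congr hins.symm (fun x _ => rfl) _)
        rw [this]
        refine hsplit x₀ hx₀X _ ?_ ?_ _
        · simp only [id_eq]; rw [hφc, hci]
        · intro x hx
          simp only [id_eq]
          rw [hφc, hcfix x (hu't hx) (fun hxi => hiu' (hxi ▸ hx))]
      have hFu : F u hu = i * F u' hu't := by
        rw [hF]; beta_reduce
        have : u.noncommProd id (hucomm u (huX u hu)) =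
            (insert i u').noncommProd id (by
              rw [hins]; exact hucomm u (huX u hu)) :=
          Finset.noncommProd_congr hins.symm (fun x _ => rfl) _
        rw [this]
        exact hsplit i hiX id rfl (fun x _ => rfl) _
      -- derive contradiction
      have h1 : x₀ * F u' hu't = i * F u' hu't := by
        rw [← hconjU, heq, hv', ← heq, hFu]
      exact hine (mul_right_cancel h1).symm
    intro u hu v hv heq
    by_contra hne
    by_cases hsub : u ⊆ v
    · have hns : ¬ v ⊆ u := fun h2 => hne (Finset.Subset.antisymm hsub h2)
      obtain ⟨i, hiv, hiu⟩ := Finset.not_subset.1 hns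
      exact main v hv u hu i hiv hiu heq.symm
    · obtain ⟨i, hiu, hiv⟩ := Finset.not_subset.1 hsub
      exact main u hu v hv i hiu hiv heq
  -- products lie in H
  have hmem : ∀ u (hu : u ⊆ t), F u hu ∈ H := by
    intro u hu
    exact H.noncommProd_mem _ (fun x hx => Subgroup.subset_closure (huX u hu x hx))
  have hinj : Function.Injective
      (fun u : {u : Finset G // u ⊆ t} => (⟨F u.1 u.2, hmem u.1 u.2⟩ : H)) := by
    intro u v h
    exact Subtype.ext (key u.1 u.2 v.1 v.2 (congrArg Subtype.val h))
  have hcardle : Nat.card {u : Finset G // u ⊆ t} ≤ Nat.card H :=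
    Nat.card_le_card_of_injective _ hinj
  have e : {u : Finset G // u ⊆ t} ≃ {u : Finset G // u ∈ t.powerset} :=
    Equiv.subtypeEquivRight (fun u => (Finset.mem_powerset).symm)
  have hpc : Nat.card {u : Finset G // u ⊆ t} = 2 ^ (k - 1) := by
    rw [Nat.card_congr e, Nat.card_eq_fintype_card, Fintype.card_coe,
      Finset.card_powerset, htcard]
  have hle := habel H hHcomm hHsetfin
  have h2 : 2 ^ (k - 1) ≤ 4 * g + 4 := by
    rw [← hpc]; exact hcardle.trans hle
  have h3 : 2 ^ (k - 1) = 4 * 2 ^ (k - 3) := by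
    rw [show k - 1 = (k - 3) + 2 by omega, pow_add]; ring
  omega
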